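/- Fix ν > 1 and a > 1, and set h(z) = 1 + a z(1−z). Define for integer C ≥ 1 and z ∈ [0,1]: Ψ_C(z) = 1 − z·Σ_{k=0}^{C} (∏_{i=0}^{k−1}(1 − i/C)) · (ν h(z))^{−k}. Then Ψ_C converges uniformly on [0,1] to Ψ̄(z) = (ν(1−z)h(z) − 1)/(ν h(z) − 1) as C → ∞. -/

import Mathlib

open Real Filter Set

private lemma prod01 (k C : ℕ) (hk : k ≤ C) (hC : 0 < C) :
    (∏ i ∈ Finset.range k, (1 - (i : ℝ) / C)) ∈ Icc (0:ℝ) 1 := by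
  have hCpos : (0:ℝ) < C := by exact_mod_cast hC
  have hfac : ∀ i ∈ Finset.range k, (0:ℝ) ≤ 1 - (i:ℝ)/C ∧ 1 - (i:ℝ)/C ≤ 1 := by
    intro i hi
    have hi' : (i:ℝ) ≤ C := by
      exact_mod_cast le_of_lt (lt_of_lt_of_le (Finset.mem_range.mp hi) hk)
    have h1 : (i:ℝ)/C ≤ 1 := (div_le_one hCpos).mpr hi'
    have h2 : (0:ℝ) ≤ (i:ℝ)/C := by positivity
    constructor <;> linarith
  constructor
  · exact Finset.prod_nonneg fun i hi => (hfac i hi).1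
  · exact Finset.prod_le_one (fun i hi => (hfac i hi).1) (fun i hi => (hfac i hi).2)

private lemma one_sub_prod_le (C : ℕ) (hC : 0 < C) :
    ∀ k, k ≤ C → (C:ℝ) * (1 - ∏ i ∈ Finset.range k, (1 - (i : ℝ) / C)) ≤ (k:ℝ)^2 := by
  have hCpos : (0:ℝ) < C := by exact_mod_cast hC
  intro k
  induction k with
  | zero => intro _; simp
  | succ n ih =>
    intro hk
    have hn : n ≤ C := Nat.le_of_succ_le hk
    have h1 := ih hn
    obtain ⟨hP0, hP1⟩ := prod01 n C hn hC
    rw [Finset.prod_range_succ]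
    set P := ∏ i ∈ Finset.range n, (1 - (i:ℝ)/C) with hP
    have e : (C:ℝ) * (1 - P * (1 - (n:ℝ)/C)) = (C:ℝ)*(1-P) + P * ((n:ℝ)/C * C) := by
      ring
    have e2 : (n:ℝ)/C * C = n := div_mul_cancel₀ _ (ne_of_gt hCpos)
    rw [e, e2]
    push_cast
    nlinarith [Nat.cast_nonneg (α := ℝ) n]

theorem stmt_14 (ν a : ℝ) (hν : 1 < ν) (ha : 1 < a)
    (h : ℝ → ℝ) (hh : ∀ z : ℝ, h z = 1 + a * z * (1 - z))
    (Ψ : ℕ → ℝ → ℝ)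
    (hΨ : ∀ (C : ℕ) (z : ℝ), Ψ C z = 1 - z * ∑ k ∈ Finset.range (C + 1),
        (∏ i ∈ Finset.range k, (1 - (i : ℝ) / C)) * (ν * h z)⁻¹ ^ k)
    (Ψb : ℝ → ℝ)
    (hΨb : ∀ z : ℝ, Ψb z = (ν * (1 - z) * h z - 1) / (ν * h z - 1)) :
    TendstoUniformlyOn Ψ Ψb atTop (Icc (0 : ℝ) 1) := by
  set r : ℝ := ν⁻¹ with hrdef
  have hν0 : (0:ℝ) < ν := by linarith
  have hr0 : 0 < r := inv_pos.mpr hν0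
  have hr1 : r < 1 := inv_lt_one_of_one_lt₀ hν
  have hsum : Summable (fun k : ℕ => (k:ℝ)^2 * r^k) := by
    have := summable_pow_mul_geometric_of_norm_lt_one (R := ℝ) 2
      (r := r) (by rw [Real.norm_eq_abs, abs_of_pos hr0]; exact hr1)
    exact this
  set M : ℝ := ∑' k : ℕ, (k:ℝ)^2 * r^k with hMdef
  have hM0 : 0 ≤ M := tsum_nonneg (by intro k; positivity)
  rw [Metric.tendstoUniformlyOn_iff]
  intro ε hε
  have hb : Tendsto (fun C : ℕ => M / C + r^(C+1) / (1 - r)) atTop (nhds 0) := by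
    have h1 : Tendsto (fun C : ℕ => M / C) atTop (nhds 0) :=
      tendsto_const_div_atTop_nhds_zero_nat M
    have h2 : Tendsto (fun C : ℕ => r^(C+1) / (1-r)) atTop (nhds 0) := by
      have hp := tendsto_pow_atTop_nhds_zero_of_lt_one hr0.le hr1
      have := (hp.comp (tendsto_add_atTop_nat 1)).div_const (1-r)
      simpa [Function.comp] using this
    simpa using h1.add h2
  have hev := hb.eventually (gt_mem_nhds hε)
  filter_upwards [hev, eventually_ge_atTop 1] with C hbC hC1
  intro z hz
  obtain ⟨hz0, hz1⟩ := hz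
  have hCpos : (0:ℝ) < C := by exact_mod_cast hC1
  -- basic facts about H = ν * h z
  have hhz : 1 ≤ h z := by
    rw [hh]
    nlinarith [mul_nonneg (mul_nonneg (by linarith : (0:ℝ) ≤ a) hz0) (by linarith : (0:ℝ) ≤ 1 - z)]
  have hH : ν ≤ ν * h z := by nlinarith
  have hH1 : 1 < ν * h z := lt_of_lt_of_le hν hH
  set q : ℝ := (ν * h z)⁻¹ with hqdef
  have hq0 : 0 < q := inv_pos.mpr (by linarith)
  have hqr : q ≤ r := inv_anti₀ hν0 hH
  have hq1 : q < 1 := lt_of_le_of_lt hqr hr1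
  -- rewrite Ψb
  have hΨbz : Ψb z = 1 - z * (1 - q)⁻¹ := by
    rw [hΨb, hqdef]
    have h0 : ν * h z ≠ 0 := by linarith
    have h1 : ν * h z - 1 ≠ 0 := by linarith
    have h2 : 1 - (ν * h z)⁻¹ ≠ 0 :=
      sub_ne_zero_of_ne (ne_of_gt (inv_lt_one_of_one_lt₀ hH1))
    field_simp
    ring
  -- geometric sum identity
  have hq1' : q ≠ 1 := ne_of_lt hq1
  have h1q : (0:ℝ) < 1 - q := by linarith
  have hne : (1:ℝ) - q ≠ 0 := ne_of_gt h1q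
  have hgs : (∑ k ∈ Finset.range (C+1), q^k) * (1 - q) = 1 - q^(C+1) := by
    have hg := geom_sum_mul q (C+1)
    linear_combination -hg
  have hgeom : (1 - q)⁻¹ = (∑ k ∈ Finset.range (C+1), q^k) + q^(C+1) / (1-q) := by
    have hS : (∑ k ∈ Finset.range (C+1), q^k) = (1 - q^(C+1))/(1-q) :=
      eq_div_of_mul_eq hne hgs
    rw [hS, inv_eq_one_div, ← add_div]
    congr 1
    ring
  -- the difference
  set p : ℕ → ℝ := fun k => ∏ i ∈ Finset.range k, (1 - (i:ℝ)/C) with hpdef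
  have hdiff : Ψb z - Ψ C z =
      z * ((∑ k ∈ Finset.range (C+1), (p k - 1) * q^k) - q^(C+1)/(1-q)) := by
    rw [hΨbz, hΨ, hgeom]
    simp only [Finset.sum_sub_distrib, sub_mul, one_mul]
    ring
  -- bound each summand
  have hterm : ∀ k ∈ Finset.range (C+1), |(p k - 1) * q^k| ≤ (k:ℝ)^2 / C * r^k := by
    intro k hk
    have hkC : k ≤ C := Nat.lt_succ_iff.mp (Finset.mem_range.mp hk)
    obtain ⟨hp0, hp1⟩ := prod01 k C hkC hC1
    have hsub := one_sub_prod_le C hC1 k hkC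
    have habs : |(p k - 1) * q^k| = (1 - p k) * q^k := by
      rw [abs_mul, abs_of_nonneg (by positivity : (0:ℝ) ≤ q^k),
        abs_of_nonpos (by simp only [hpdef]; linarith), neg_sub]
    rw [habs]
    have h1 : 1 - p k ≤ (k:ℝ)^2 / C := by
      rw [le_div_iff₀ hCpos, mul_comm]
      simpa [hpdef] using hsub
    have h2 : q^k ≤ r^k := pow_le_pow_left₀ hq0.le hqr k
    have : (0:ℝ) ≤ 1 - p k := by linarith
    exact mul_le_mul h1 h2 (by positivity) (by positivity)
  have hsum1 : |∑ k ∈ Finset.range (C+1), (p k - 1) * q^k| ≤ M / C := by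
    calc |∑ k ∈ Finset.range (C+1), (p k - 1) * q^k|
        ≤ ∑ k ∈ Finset.range (C+1), |(p k - 1) * q^k| := Finset.abs_sum_le_sum_abs _ _
      _ ≤ ∑ k ∈ Finset.range (C+1), (k:ℝ)^2 / C * r^k := Finset.sum_le_sum hterm
      _ = (∑ k ∈ Finset.range (C+1), (k:ℝ)^2 * r^k) / C := by
          rw [Finset.sum_div]; congr 1; ext k; ring
      _ ≤ M / C := by
          apply (div_le_div_iff_of_pos_right hCpos).mpr
          exact Summable.sum_le_tsum _ (fun k _ => by positivity) hsum
  have hsum2 : |q^(C+1)/(1-q)| ≤ r^(C+1)/(1-r) := by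
    rw [abs_of_nonneg (by positivity)]
    exact div_le_div₀ (by positivity) (pow_le_pow_left₀ hq0.le hqr _)
      (by linarith) (by linarith)
  rw [Real.dist_eq, hdiff]
  calc |z * ((∑ k ∈ Finset.range (C+1), (p k - 1) * q^k) - q^(C+1)/(1-q))|
      = |z| * |(∑ k ∈ Finset.range (C+1), (p k - 1) * q^k) - q^(C+1)/(1-q)| := abs_mul _ _
    _ ≤ |(∑ k ∈ Finset.range (C+1), (p k - 1) * q^k) - q^(C+1)/(1-q)| := by
        apply mul_le_of_le_one_left (abs_nonneg _)
        rw [abs_of_nonneg hz0]; exact hz1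
    _ ≤ |∑ k ∈ Finset.range (C+1), (p k - 1) * q^k| + |q^(C+1)/(1-q)| := by
        rw [sub_eq_add_neg]
        exact (abs_add_le _ _).trans (by rw [abs_neg])
    _ ≤ M / C + r^(C+1)/(1-r) := add_le_add hsum1 hsum2
    _ < ε := hbC
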